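/- Let S and A be finite types, let P : S → A → S → ℝ satisfy P s a q ≥ 0 for all s, a, q, and let π : S → S → ℝ satisfy π s q ≥ 0 for all s, q, with π s q > 0 whenever there exists a with P s a q > 0. For x : S × A → ℝ, define x_{s,q} = Σ_{a} x(s,a) · P s a q and KL(x) = Σ_{s ∈ S} Σ_{q ∈ S} x_{s,q} · log( x_{s,q} / (π s q · Σ_{a} x(s,a)) ), with the real logarithm (so every term with x_{s,q} = 0 contributes 0). Then KL is convex on the nonnegative orthant {x : S × A → ℝ | ∀ s a, 0 ≤ x (s,a)}. -/

import Mathlib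

open Finset

private lemma logsum (u1 v1 u2 v2 : ℝ) (hu1 : 0 ≤ u1) (hv1 : 0 ≤ v1)
    (hu2 : 0 ≤ u2) (hv2 : 0 ≤ v2) (h1 : v1 = 0 → u1 = 0) (h2 : v2 = 0 → u2 = 0) :
    (u1 + u2) * Real.log ((u1 + u2) / (v1 + v2)) ≤
      u1 * Real.log (u1 / v1) + u2 * Real.log (u2 / v2) := by
  rcases eq_or_lt_of_le hv1 with h | hv1pos
  · simp [← h, h1 h.symm]
  rcases eq_or_lt_of_le hv2 with h | hv2pos
  · simp [← h, h2 h.symm]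
  have hv : 0 < v1 + v2 := by linarith
  have key := Real.convexOn_mul_log.2 (Set.mem_Ici.2 (show (0:ℝ) ≤ u1 / v1 by positivity))
    (Set.mem_Ici.2 (show (0:ℝ) ≤ u2 / v2 by positivity))
    (show (0:ℝ) ≤ v1 / (v1 + v2) by positivity) (show (0:ℝ) ≤ v2 / (v1 + v2) by positivity)
    (show v1 / (v1 + v2) + v2 / (v1 + v2) = 1 by field_simp)
  simp only [smul_eq_mul] at key
  have hmix : v1 / (v1 + v2) * (u1 / v1) + v2 / (v1 + v2) * (u2 / v2)
      = (u1 + u2) / (v1 + v2) := by field_simp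
  rw [hmix] at key
  have h2' := mul_le_mul_of_nonneg_left key hv.le
  calc (u1 + u2) * Real.log ((u1 + u2) / (v1 + v2))
      = (v1 + v2) * ((u1 + u2) / (v1 + v2) * Real.log ((u1 + u2) / (v1 + v2))) := by
        field_simp
    _ ≤ (v1 + v2) * (v1 / (v1 + v2) * (u1 / v1 * Real.log (u1 / v1)) +
          v2 / (v1 + v2) * (u2 / v2 * Real.log (u2 / v2))) := h2'
    _ = u1 * Real.log (u1 / v1) + u2 * Real.log (u2 / v2) := by field_simp

private lemma scale_term (c L V : ℝ) :
    c * (L * Real.log (L / V)) = (c * L) * Real.log ((c * L) / (c * V)) := by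
  rcases eq_or_ne c 0 with rfl | hc
  · simp
  · rw [mul_div_mul_left _ _ hc]; ring

/-- The KL divergence between the path distributions of the deceptive and
reference policies, expressed as a function of the state-action occupancy
measure (equation (6) of the paper), is convex on the nonnegative orthant. -/
theorem kl_occupancy_convexOn
    (S A : Type*) [Fintype S] [Fintype A]
    (P : S → A → S → ℝ) (hP : ∀ s a q, 0 ≤ P s a q)
    (π : S → S → ℝ) (hπ0 : ∀ s q, 0 ≤ π s q)
    (hπ : ∀ s q, (∃ a, 0 < P s a q) → 0 < π s q) :
    ConvexOn ℝ {x : S × A → ℝ | ∀ s a, 0 ≤ x (s, a)}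
      (fun x : S × A → ℝ =>
        ∑ s : S, ∑ q : S,
          (∑ a : A, x (s, a) * P s a q) *
            Real.log ((∑ a : A, x (s, a) * P s a q) /
              (π s q * ∑ a : A, x (s, a)))) := by
  constructor
  · intro x hx y hy a b ha hb hab s α
    have h1 := hx s α; have h2 := hy s α
    simp only [Pi.add_apply, Pi.smul_apply, smul_eq_mul]
    positivity
  · intro x hx y hy a b ha hb hab
    simp only [Pi.add_apply, Pi.smul_apply, smul_eq_mul]
    rw [Finset.mul_sum, Finset.mul_sum, ← Finset.sum_add_distrib]
    refine Finset.sum_le_sum fun s _ => ?_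
    rw [Finset.mul_sum, Finset.mul_sum, ← Finset.sum_add_distrib]
    refine Finset.sum_le_sum fun q _ => ?_
    set Lx := ∑ α : A, x (s, α) * P s α q with hLx
    set Ly := ∑ α : A, y (s, α) * P s α q with hLy
    set Mx := ∑ α : A, x (s, α) with hMx
    set My := ∑ α : A, y (s, α) with hMy
    have hLc : (∑ α : A, (a * x (s, α) + b * y (s, α)) * P s α q) = a * Lx + b * Ly := by
      simp only [hLx, hLy, Finset.mul_sum, ← Finset.sum_add_distrib]
      exact Finset.sum_congr rfl fun α _ => by ring
    have hMc : (∑ α : A, (a * x (s, α) + b * y (s, α))) = a * Mx + b * My := by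
      simp only [hMx, hMy, Finset.mul_sum, ← Finset.sum_add_distrib]
    rw [hLc, hMc]
    have hLxnn : 0 ≤ Lx := Finset.sum_nonneg fun α _ => mul_nonneg (hx s α) (hP s α q)
    have hLynn : 0 ≤ Ly := Finset.sum_nonneg fun α _ => mul_nonneg (hy s α) (hP s α q)
    have hMxnn : 0 ≤ Mx := Finset.sum_nonneg fun α _ => hx s α
    have hMynn : 0 ≤ My := Finset.sum_nonneg fun α _ => hy s α
    have hπq : 0 ≤ π s q := hπ0 s q
    have hzero : ∀ (z : S × A → ℝ), (∀ s a, 0 ≤ z (s, a)) →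
        π s q * (∑ α : A, z (s, α)) = 0 → (∑ α : A, z (s, α) * P s α q) = 0 := by
      intro z hz h
      rcases mul_eq_zero.1 h with h | h
      · refine Finset.sum_eq_zero fun α _ => ?_
        have : P s α q = 0 := by
          by_contra hne
          have : 0 < P s α q := lt_of_le_of_ne (hP s α q) (Ne.symm hne)
          exact absurd (hπ s q ⟨α, this⟩) (by simp [h])
        simp [this]
      · refine Finset.sum_eq_zero fun α _ => ?_
        have : z (s, α) = 0 :=
          (Finset.sum_eq_zero_iff_of_nonneg fun β _ => hz s β).1 h α (Finset.mem_univ α)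
        simp [this]
    have h1 : a * (π s q * Mx) = 0 → a * Lx = 0 := by
      intro h
      rcases mul_eq_zero.1 h with h | h
      · simp [h]
      · simp [hLx, hzero x hx h]
    have h2 : b * (π s q * My) = 0 → b * Ly = 0 := by
      intro h
      rcases mul_eq_zero.1 h with h | h
      · simp [h]
      · simp [hLy, hzero y hy h]
    have key := logsum (a * Lx) (a * (π s q * Mx)) (b * Ly) (b * (π s q * My))
      (by positivity) (by positivity) (by positivity) (by positivity) h1 h2
    calc (a * Lx + b * Ly) * Real.log ((a * Lx + b * Ly) / (π s q * (a * Mx + b * My)))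
        = (a * Lx + b * Ly) *
            Real.log ((a * Lx + b * Ly) / (a * (π s q * Mx) + b * (π s q * My))) := by
          ring_nf
      _ ≤ (a * Lx) * Real.log ((a * Lx) / (a * (π s q * Mx))) +
            (b * Ly) * Real.log ((b * Ly) / (b * (π s q * My))) := key
      _ = a * (Lx * Real.log (Lx / (π s q * Mx))) + b * (Ly * Real.log (Ly / (π s q * My))) := by
          rw [← scale_term, ← scale_term]
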